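/- There is no quantum metric on the two-point noncommutative space qM₂(ℂ): there exists no matrix ρ indexed by Fin 2 × Fin 2 (i.e. no element of M₂(ℂ) ⊗ M₂(ℂ)) satisfying all of: (i)' ρ is positive semidefinite; (ii)' ρ P_δ = P_δ ρ = 0; (iii)' every vector x with ρ x = 0 lies in the range of P_δ; (iv)' 𝔉(ρ) = ρ; (v)' ρ ⊗ 1 + 1 ⊗ ρ − 𝔐(ρ) is positive semidefinite. -/

import Mathlib

open Matrix
open scoped ComplexOrder

variable {ι : Type*} [Fintype ι] [DecidableEq ι]

/-- The flip `𝔉`, with `𝔉(a ⊗ b) = b ⊗ a`: `𝔉(ρ)_{(i,j),(k,l)} = ρ_{(j,i),(l,k)}`. -/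
def flipOp (ρ : Matrix (ι × ι) (ι × ι) ℂ) : Matrix (ι × ι) (ι × ι) ℂ :=
  fun p q => ρ (p.2, p.1) (q.2, q.1)

/-- The swap matrix `S_{(i,j),(k,l)} = δ_{il} δ_{jk}`. -/
def swapMatrix : Matrix (ι × ι) (ι × ι) ℂ :=
  fun p q => if p.1 = q.2 ∧ p.2 = q.1 then 1 else 0

/-- `P_δ = (1 + S)/2`, the orthogonal projection onto the symmetric subspace:
the characteristic function of the diagonal for `Mₙ(ℂ)` in its identity
representation. -/
noncomputable def Pdelta : Matrix (ι × ι) (ι × ι) ℂ :=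
  (2 : ℂ)⁻¹ • (1 + swapMatrix)

/-- `ρ ⊗ 1` on triple indices: `(ρ ⊗ 1)_{(i,j,k),(i',j',k')} = ρ_{(i,j),(i',j')} δ_{kk'}`. -/
def tensorOne (ρ : Matrix (ι × ι) (ι × ι) ℂ) : Matrix (ι × ι × ι) (ι × ι × ι) ℂ :=
  fun p q => ρ (p.1, p.2.1) (q.1, q.2.1) * (if p.2.2 = q.2.2 then 1 else 0)

/-- `1 ⊗ ρ` on triple indices: `(1 ⊗ ρ)_{(i,j,k),(i',j',k')} = δ_{ii'} ρ_{(j,k),(j',k')}`. -/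
def oneTensor (ρ : Matrix (ι × ι) (ι × ι) ℂ) : Matrix (ι × ι × ι) (ι × ι × ι) ℂ :=
  fun p q => (if p.1 = q.1 then 1 else 0) * ρ (p.2.1, p.2.2) (q.2.1, q.2.2)

/-- The middle-unit map `𝔐`, with `𝔐(a ⊗ b) = a ⊗ 1 ⊗ b`:
`𝔐(ρ)_{(i,k,j),(i',k',j')} = δ_{kk'} ρ_{(i,j),(i',j')}`. -/
def midUnit (ρ : Matrix (ι × ι) (ι × ι) ℂ) : Matrix (ι × ι × ι) (ι × ι × ι) ℂ :=
  fun p q => (if p.2.1 = q.2.1 then 1 else 0) * ρ (p.1, p.2.2) (q.1, q.2.2)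

/-- A quantum metric on `qMₙ(ℂ)` (w.r.t. the identity representation): a matrix
`ρ ∈ Mₙ(ℂ) ⊗ Mₙ(ℂ)` satisfying (i)' positivity, (ii)' `ρ P_δ = P_δ ρ = 0`,
(iii)' the kernel of `ρ` is contained in the range of `P_δ`, (iv)' `𝔉(ρ) = ρ`, and
(v)' `ρ ⊗ 1 + 1 ⊗ ρ − 𝔐(ρ) ≥ 0`. -/
noncomputable def IsQuantumMetric (ρ : Matrix (ι × ι) (ι × ι) ℂ) : Prop :=
  ρ.PosSemidef ∧
  (ρ * Pdelta = 0 ∧ Pdelta * ρ = 0) ∧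
  (∀ x : ι × ι → ℂ, ρ.mulVec x = 0 → x ∈ LinearMap.range (Pdelta (ι := ι)).mulVecLin) ∧
  flipOp ρ = ρ ∧
  (tensorOne ρ + oneTensor ρ - midUnit ρ).PosSemidef

set_option maxHeartbeats 2000000 in
/-- there is no quantum metric on the two-point noncommutative space
`qM₂(ℂ)`. -/
theorem stmt5 : ¬ ∃ ρ : Matrix (Fin 2 × Fin 2) (Fin 2 × Fin 2) ℂ, IsQuantumMetric ρ := by
  rintro ⟨ρ, hpsd, ⟨hrght, hlft⟩, hker, -, hT⟩
  have hcol : ∀ p q, ρ p q + ρ p (q.2, q.1) = 0 := by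
    intro p q
    have h := congrFun (congrFun hrght p) q
    simp only [Matrix.mul_apply, Pdelta, swapMatrix, Matrix.smul_apply, Matrix.add_apply,
      Matrix.one_apply, Matrix.zero_apply, Fintype.sum_prod_type, Fin.sum_univ_two] at h
    obtain ⟨q1, q2⟩ := q
    fin_cases q1 <;> fin_cases q2 <;> simp_all [Prod.ext_iff] <;> linear_combination 2 * h
  have hrow : ∀ p q, ρ p q + ρ (p.2, p.1) q = 0 := by
    intro p q
    have h := congrFun (congrFun hlft p) q
    simp only [Matrix.mul_apply, Pdelta, swapMatrix, Matrix.smul_apply, Matrix.add_apply,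
      Matrix.one_apply, Matrix.zero_apply, Fintype.sum_prod_type, Fin.sum_univ_two] at h
    obtain ⟨p1, p2⟩ := p
    fin_cases p1 <;> fin_cases p2 <;> simp_all [Prod.ext_iff] <;> linear_combination 2 * h
  set μ : ℂ := ρ (0,1) (0,1) with hμ
  have hcdiag : ∀ p (i : Fin 2), ρ p (i, i) = 0 := fun p i => by
    have := hcol p (i, i); linear_combination this / 2
  have hrdiag : ∀ (i : Fin 2) q, ρ (i, i) q = 0 := fun i q => by
    have := hrow (i, i) q; linear_combination this / 2
  have e1 : ρ ((0:Fin 2),(1:Fin 2)) ((1:Fin 2),(0:Fin 2)) = -μ := by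
    linear_combination hcol (0,1) (1,0) + hμ
  have e2 : ρ ((1:Fin 2),(0:Fin 2)) ((0:Fin 2),(1:Fin 2)) = -μ := by
    linear_combination hrow (1,0) (0,1) + hμ
  have e3 : ρ ((1:Fin 2),(0:Fin 2)) ((1:Fin 2),(0:Fin 2)) = μ := by
    linear_combination hrow (1,0) (1,0) - e1
  have hρ : ∀ p q, ρ p q = μ *
      ((if p = ((0:Fin 2),(1:Fin 2)) then 1 else 0) - (if p = (1,0) then 1 else 0))
      * ((if q = ((0:Fin 2),(1:Fin 2)) then 1 else 0) - (if q = (1,0) then 1 else 0)) := by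
    rintro ⟨p1, p2⟩ ⟨q1, q2⟩
    fin_cases p1 <;> fin_cases p2 <;> fin_cases q1 <;> fin_cases q2 <;>
      simp [Prod.ext_iff, hcdiag, hrdiag, e1, e2, e3, ← hμ,
        -Prod.mk_zero_zero, -Prod.mk_one_one]
  have hμ0 : 0 ≤ μ := by
    have h := hpsd.dotProduct_mulVec_nonneg (fun p => if p = ((0:Fin 2),(1:Fin 2)) then 1 else 0)
    simpa [dotProduct, Matrix.mulVec, Fintype.sum_prod_type, Fin.sum_univ_two,
      Prod.ext_iff, ← hμ, -Prod.mk_zero_zero, -Prod.mk_one_one] using h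
  have hμne : μ ≠ 0 := by
    intro h0
    have hz : ρ.mulVec (fun p => (if p = ((0:Fin 2),(1:Fin 2)) then 1 else 0)
        - (if p = (1,0) then 1 else 0)) = 0 := by
      ext p
      simp [Matrix.mulVec, dotProduct, hρ, h0]
    obtain ⟨x, hx⟩ := hker _ hz
    have f1 := congrFun hx ((0:Fin 2),(1:Fin 2))
    have f2 := congrFun hx ((1:Fin 2),(0:Fin 2))
    simp only [Matrix.mulVecLin_apply, Matrix.mulVec, dotProduct, Pdelta, swapMatrix,
      Matrix.smul_apply, Matrix.add_apply, Matrix.one_apply, Fintype.sum_prod_type,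
      Fin.sum_univ_two, Prod.ext_iff] at f1 f2
    norm_num at f1 f2
    rw [f1] at f2
    norm_num at f2
  have hμpos : 0 < μ := lt_of_le_of_ne hμ0 (Ne.symm hμne)
  set v : Fin 2 × Fin 2 × Fin 2 → ℂ := fun p =>
    (if p = ((0:Fin 2),(0:Fin 2),(1:Fin 2)) then 1 else 0) - (if p = (1,0,0) then 1 else 0)
    + (if p = (0,1,1) then 1 else 0) - (if p = (1,1,0) then 1 else 0) with hv
  have h := hT.dotProduct_mulVec_nonneg v
  have hval : dotProduct (star v) ((tensorOne ρ + oneTensor ρ - midUnit ρ).mulVec v)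
      = -4 * μ := by
    simp only [hv, dotProduct, Matrix.mulVec, Matrix.add_apply, Matrix.sub_apply,
      tensorOne, oneTensor, midUnit, hρ, Fintype.sum_prod_type, Fin.sum_univ_two,
      Pi.star_apply, Prod.ext_iff]
    norm_num
    ring
  rw [hval] at h
  have hneg : (-4 : ℂ) * μ < 0 := by
    have h4 : (-4 : ℂ) < 0 := by
      rw [Complex.lt_def]; norm_num
    exact mul_neg_of_neg_of_pos h4 hμpos
  exact hneg.not_ge h
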